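/- Let k ≥ 2 be an integer and set m = ⌊(k+1)/2⌋. For every integer i with 1 ≤ i ≤ m and every real a ∈ (0,1]: if (i−1)/(k+1−i) ≤ a ≤ i/(k+1−i) then σ_k((a,1)) = (k+1−i)·a, and if i/(k+1−i) ≤ a ≤ i/(k−i) then σ_k((a,1)) = i. Equivalently, the normalized Ekeland–Hofer capacity \bar c_k(a) = σ_k((a,1))/m of the 4-dimensional ellipsoid E(a,1) is the piecewise linear function equal to ((k+1−i)/m)·a for (i−1)/(k+1−i) ≤ a ≤ i/(k+1−i) and equal to i/m for i/(k+1−i) ≤ a ≤ i/(k−i). -/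
import Mathlib


/-- `ehSigma2 a k` is the k-th smallest element (with multiplicity) of the multiset
`{m•a : m ≥ 1} ∪ {m•1 : m ≥ 1}`, i.e. `σ_k((a,1)) = min {t > 0 : ⌊t/a⌋ + ⌊t⌋ ≥ k}`.
The k-th Ekeland–Hofer capacity of the 4-dimensional ellipsoid `E(a,1)` is `π • ehSigma2 a k`. -/
noncomputable def ehSigma2 (a : ℝ) (k : ℕ) : ℝ :=
  sInf {t : ℝ | 0 < t ∧ (k : ℤ) ≤ ⌊t / a⌋ + ⌊t⌋}

lemma ehSigma2_eq (a c : ℝ) (k : ℕ) (hc : 0 < c) (hmem : (k : ℤ) ≤ ⌊c / a⌋ + ⌊c⌋)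
    (hlb : ∀ t : ℝ, 0 < t → (k : ℤ) ≤ ⌊t / a⌋ + ⌊t⌋ → c ≤ t) : ehSigma2 a k = c := by
  apply le_antisymm
  · exact csInf_le ⟨c, fun t ht => hlb t ht.1 ht.2⟩ ⟨hc, hmem⟩
  · exact le_csInf ⟨c, hc, hmem⟩ fun t ht => hlb t ht.1 ht.2

/-- The normalized Ekeland–Hofer capacity `σ_k((a,1))/m`, `m = ⌊(k+1)/2⌋`, of `E(a,1)` is the
piecewise linear function equal to `(k+1-i)a/m` on `[(i-1)/(k+1-i), i/(k+1-i)]` and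
equal to `i/m` on `[i/(k+1-i), i/(k-i)]`, for integers `1 ≤ i ≤ m`. -/
theorem ehCapacity_piecewise_linear_on_ellipsoids (k : ℕ) (hk : 2 ≤ k)
    (i : ℕ) (hi : 1 ≤ i) (him : i ≤ (k + 1) / 2)
    (a : ℝ) (ha : 0 < a) (ha1 : a ≤ 1) :
    (((i : ℝ) - 1) / ((k : ℝ) + 1 - i) ≤ a → a ≤ (i : ℝ) / ((k : ℝ) + 1 - i) →
      ehSigma2 a k = ((k : ℝ) + 1 - i) * a) ∧
    ((i : ℝ) / ((k : ℝ) + 1 - i) ≤ a → a ≤ (i : ℝ) / ((k : ℝ) - i) →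
      ehSigma2 a k = (i : ℝ)) := by
  have hik : i < k := by omega
  have hikR : (i : ℝ) < k := by exact_mod_cast hik
  have hiR : (1 : ℝ) ≤ i := by exact_mod_cast hi
  set N : ℝ := (k : ℝ) + 1 - i with hNdef
  have hNpos : 0 < N := by rw [hNdef]; linarith
  have hkiR : (0 : ℝ) < (k : ℝ) - i := by linarith
  have hNint : N = (((k : ℤ) + 1 - i : ℤ) : ℝ) := by rw [hNdef]; push_cast; ring
  have hfloorN : ⌊N⌋ = (k : ℤ) + 1 - i := by rw [hNint, Int.floor_intCast]
  constructor
  · intro h1 h2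
    apply ehSigma2_eq
    · exact mul_pos hNpos ha
    · have hdiv : N * a / a = N := by field_simp
      rw [hdiv, hfloorN]
      have hfl : ((i : ℤ) - 1 : ℤ) ≤ ⌊N * a⌋ := by
        rw [Int.le_floor]
        have := (div_le_iff₀ hNpos).mp h1
        push_cast
        nlinarith
      omega
    · intro t ht hsum
      by_contra hcon
      push_neg at hcon
      have h1' : ⌊t / a⌋ < (k : ℤ) + 1 - i := by
        rw [Int.floor_lt, ← hNint]
        exact (div_lt_iff₀ ha).mpr (by linarith)
      have hNa : N * a ≤ (i : ℝ) := by
        have := (le_div_iff₀ hNpos).mp h2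
        nlinarith
      have h2' : ⌊t⌋ < (i : ℤ) := by
        rw [Int.floor_lt]
        push_cast
        linarith
      omega
  · intro h1 h2
    apply ehSigma2_eq
    · exact_mod_cast Nat.pos_of_ne_zero (by omega)
    · have hfl2 : ⌊(i : ℝ)⌋ = (i : ℤ) := Int.floor_natCast i
      have hfl1 : ((k : ℤ) - i : ℤ) ≤ ⌊(i : ℝ) / a⌋ := by
        rw [Int.le_floor]
        have := (le_div_iff₀ hkiR).mp h2
        have hki : (((k : ℤ) - i : ℤ) : ℝ) = (k : ℝ) - i := by push_cast; ring
        rw [hki, le_div_iff₀ ha]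
        nlinarith
      omega
    · intro t ht hsum
      by_contra hcon
      push_neg at hcon
      have h2' : ⌊t⌋ < (i : ℤ) := by rw [Int.floor_lt]; exact_mod_cast hcon
      have h1' : (k : ℤ) + 1 - i ≤ ⌊t / a⌋ := by omega
      have hle : N ≤ t / a := by
        rw [hNint]
        calc (((k : ℤ) + 1 - i : ℤ) : ℝ) ≤ (⌊t / a⌋ : ℝ) := by exact_mod_cast h1'
          _ ≤ t / a := Int.floor_le _
      have hNa : (i : ℝ) ≤ N * a := by
        have := (div_le_iff₀ hNpos).mp h1
        nlinarith
      have : N * a ≤ t := (le_div_iff₀ ha).mp hle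
      linarith
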